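/- (Komaroff lower bound for the filtering Riccati equation) Under the stated assumptions, the positive definite solution Σ of the discrete algebraic Riccati equation satisfies Σ ⪰ A (W⁻¹ + Cᵀ V⁻¹ C)⁻¹ Aᵀ + W. -/

import Mathlib

open Matrix

/-- Loewner-order antitonality of matrix inversion for positive definite real
matrices: if `P ⪰ Q ≻ 0` then `Q⁻¹ ⪰ P⁻¹`. -/
lemma riccati_aux_inv_antitone {m : ℕ} {P Q : Matrix (Fin m) (Fin m) ℝ}
    (hP : P.PosDef) (hQ : Q.PosDef) (h : (P - Q).PosSemidef) :
    (Q⁻¹ - P⁻¹).PosSemidef := by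
  haveI := hP.isUnit.invertible
  haveI := hQ.inv.isUnit.invertible
  have hQQ : Q⁻¹⁻¹ = Q :=
    Matrix.nonsing_inv_nonsing_inv _ ((Matrix.isUnit_iff_isUnit_det _).mp hQ.isUnit)
  have h1 := Matrix.PosDef.fromBlocks₁₁ (A := P) (1 : Matrix (Fin m) (Fin m) ℝ) Q⁻¹ hP
  have h2 := Matrix.PosDef.fromBlocks₂₂ P (1 : Matrix (Fin m) (Fin m) ℝ) hQ.inv
  simp only [Matrix.conjTranspose_one, Matrix.one_mul, Matrix.mul_one, hQQ] at h1 h2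
  exact h1.mp (h2.mpr h)

/-- Komaroff lower bound: the positive definite solution `S` of the filtering
discrete algebraic Riccati equation satisfies `S ⪰ A (W⁻¹ + Cᵀ V⁻¹ C)⁻¹ Aᵀ + W`. -/
theorem riccati_komaroff_lower {n : ℕ} (hn : 1 ≤ n)
    (A W S : Matrix (Fin n) (Fin n) ℝ)
    (c σ : Fin n → ℝ) (hc : ∀ i, 0 < c i) (hσ : ∀ i, 0 < σ i)
    (hW : W.PosDef) (hS : S.PosDef)
    (hric : S = A * S * Aᵀ -
        A * S * (Matrix.diagonal c)ᵀ *
          (Matrix.diagonal c * S * (Matrix.diagonal c)ᵀ +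
            Matrix.diagonal fun i => σ i ^ 2)⁻¹ *
          Matrix.diagonal c * S * Aᵀ + W) :
    (S - (A * (W⁻¹ + (Matrix.diagonal c)ᵀ * (Matrix.diagonal fun i => σ i ^ 2)⁻¹ *
        Matrix.diagonal c)⁻¹ * Aᵀ + W)).PosSemidef := by
  set C : Matrix (Fin n) (Fin n) ℝ := Matrix.diagonal c with hCdef
  set V : Matrix (Fin n) (Fin n) ℝ := Matrix.diagonal (fun i => σ i ^ 2) with hVdef
  have hV : V.PosDef := Matrix.PosDef.diagonal fun i => pow_pos (hσ i) 2
  have hVinv : V⁻¹.PosDef := hV.inv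
  have hCt : Cᴴ = Cᵀ := Matrix.conjTranspose_eq_transpose_of_trivial C
  have hAt : Aᴴ = Aᵀ := Matrix.conjTranspose_eq_transpose_of_trivial A
  -- K = Cᵀ V⁻¹ C is positive semidefinite
  have hK : (Cᵀ * V⁻¹ * C).PosSemidef := by
    have := hVinv.posSemidef.conjTranspose_mul_mul_same C
    rwa [hCt] at this
  have hSK : (S⁻¹ + Cᵀ * V⁻¹ * C).PosDef := hS.inv.add_posSemidef hK
  have hWK : (W⁻¹ + Cᵀ * V⁻¹ * C).PosDef := hW.inv.add_posSemidef hK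
  -- Woodbury: (S⁻¹ + Cᵀ V⁻¹ C)⁻¹ = S - S Cᵀ (V + C S Cᵀ)⁻¹ C S
  have hSS : S⁻¹⁻¹ = S :=
    Matrix.nonsing_inv_nonsing_inv _ ((Matrix.isUnit_iff_isUnit_det _).mp hS.isUnit)
  have hVV : V⁻¹⁻¹ = V :=
    Matrix.nonsing_inv_nonsing_inv _ ((Matrix.isUnit_iff_isUnit_det _).mp hV.isUnit)
  have hCSC : (C * S * Cᵀ).PosSemidef := by
    have := hS.posSemidef.mul_mul_conjTranspose_same C
    rwa [hCt] at this
  have hVCSC : (V + C * S * Cᵀ).PosDef := hV.add_posSemidef hCSC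
  have hwood := Matrix.add_mul_mul_inv_eq_sub S⁻¹ Cᵀ V⁻¹ C hS.inv.isUnit hVinv.isUnit
    (by rw [hVV, hSS]; exact hVCSC.isUnit)
  rw [hVV, hSS] at hwood
  -- rewrite the Riccati equation
  have key : S - W = A * (S⁻¹ + Cᵀ * V⁻¹ * C)⁻¹ * Aᵀ := by
    rw [hwood]
    nth_rewrite 1 [hric]
    rw [add_comm (C * S * Cᵀ) V]
    simp only [Matrix.mul_sub, Matrix.sub_mul, Matrix.mul_assoc]
    abel
  have hSW : (S - W).PosSemidef := by
    rw [key]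
    have := hSK.inv.posSemidef.mul_mul_conjTranspose_same A
    rwa [hAt] at this
  -- monotonicity twice
  have h1 : (W⁻¹ - S⁻¹).PosSemidef := riccati_aux_inv_antitone hS hW hSW
  have h2 : ((S⁻¹ + Cᵀ * V⁻¹ * C)⁻¹ - (W⁻¹ + Cᵀ * V⁻¹ * C)⁻¹).PosSemidef := by
    apply riccati_aux_inv_antitone hWK hSK
    have : W⁻¹ + Cᵀ * V⁻¹ * C - (S⁻¹ + Cᵀ * V⁻¹ * C) = W⁻¹ - S⁻¹ := by abel
    rw [this]; exact h1
  have final : S - (A * (W⁻¹ + Cᵀ * V⁻¹ * C)⁻¹ * Aᵀ + W)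
      = A * ((S⁻¹ + Cᵀ * V⁻¹ * C)⁻¹ - (W⁻¹ + Cᵀ * V⁻¹ * C)⁻¹) * Aᵀ := by
    have := key
    rw [Matrix.mul_sub, Matrix.sub_mul, ← key]
    abel
  rw [final]
  have := h2.mul_mul_conjTranspose_same A
  rwa [hAt] at this
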